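/- Let P be a commutative ℂ-algebra with a ℂ-linear derivation ∂ : P → P, and let (β_n)_{n∈ℕ} be a family of ℂ-bilinear maps β_n : P × P → P such that for all a, b ∈ P, β_n(a,b) = 0 for all but finitely many n (the coefficients of a λ-bracket {a_λ b} = ∑_n β_n(a,b) λ^n). Assume: (sesquilinearity) β_0(∂a, b) = 0, β_{n+1}(∂a, b) = −β_n(a,b), β_0(a, ∂b) = ∂(β_0(a,b)), and β_{n+1}(a, ∂b) = β_n(a,b) + ∂(β_{n+1}(a,b)) for all n ∈ ℕ and a, b ∈ P; (skew-symmetry at λ = 0) β_0(a,b) = −∑_{n≥0} (−1)^n ∂^n(β_n(b,a)) for all a, b; (Jacobi at λ = μ = 0) β_0(a, β_0(b,c)) = β_0(β_0(a,b), c) + β_0(b, β_0(a,c)) for all a, b, c. Then the bracket [a + ∂P, b + ∂P] := β_0(a,b) + ∂P on the quotient ℂ-vector space P/∂P, where ∂P is the range of ∂, is well defined (independent of the chosen representatives) and makes P/∂P a Lie algebra over ℂ. -/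
import Mathlib


/-- Proposition of Section 2.1, purely even case: for a Poisson vertex algebra
(Lie conformal algebra) `P` with λ-bracket `{a_λ b} = ∑ₙ βₙ(a,b) λⁿ`, the bracket
`[a + ∂P, b + ∂P] = β₀(a,b) + ∂P` on `P/∂P` is well defined and makes `P/∂P`
a Lie algebra. -/
theorem stmt_9 {P : Type*} [CommRing P] [Algebra ℂ P]
    (D : Derivation ℂ P P)
    (β : ℕ → P →ₗ[ℂ] P →ₗ[ℂ] P)
    (hfin : ∀ a b : P, ∃ N : ℕ, ∀ n : ℕ, N ≤ n → β n a b = 0)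
    (hses1 : ∀ a b : P, β 0 (D a) b = 0)
    (hses2 : ∀ (n : ℕ) (a b : P), β (n + 1) (D a) b = - β n a b)
    (hses3 : ∀ a b : P, β 0 a (D b) = D (β 0 a b))
    (hses4 : ∀ (n : ℕ) (a b : P), β (n + 1) a (D b) = β n a b + D (β (n + 1) a b))
    (hskew : ∀ (a b : P) (N : ℕ), (∀ n : ℕ, N ≤ n → β n b a = 0) →
      β 0 a b = - ∑ n ∈ Finset.range N, ((-1 : ℂ) ^ n) • (⇑D)^[n] (β n b a))
    (hjac : ∀ a b c : P, β 0 a (β 0 b c) = β 0 (β 0 a b) c + β 0 b (β 0 a c)) :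
    ∃ br : (P ⧸ LinearMap.range D.toLinearMap) →ₗ[ℂ]
        (P ⧸ LinearMap.range D.toLinearMap) →ₗ[ℂ]
        (P ⧸ LinearMap.range D.toLinearMap),
      (∀ a b : P, br (Submodule.Quotient.mk a) (Submodule.Quotient.mk b)
          = Submodule.Quotient.mk (β 0 a b)) ∧
      (∀ x y, br x y = - br y x) ∧
      (∀ x y z, br x (br y z) = br (br x y) z + br y (br x z)) := by
  set Q : Submodule ℂ P := LinearMap.range D.toLinearMap with hQ
  -- inner lift: for each a, b ↦ β 0 a b descends in b
  have hker2 : ∀ a : P, Q ≤ LinearMap.ker (Q.mkQ.comp (β 0 a)) := by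
    intro a x hx
    obtain ⟨y, rfl⟩ := hx
    simp only [LinearMap.mem_ker, LinearMap.comp_apply, Derivation.coeFn_coe]
    rw [hses3, Submodule.mkQ_apply, Submodule.Quotient.mk_eq_zero]
    exact ⟨β 0 a y, rfl⟩
  let h : P →ₗ[ℂ] (P ⧸ Q) →ₗ[ℂ] (P ⧸ Q) :=
    { toFun := fun a => Q.liftQ (Q.mkQ.comp (β 0 a)) (hker2 a)
      map_add' := by
        intro a b
        refine LinearMap.ext fun x => ?_
        obtain ⟨y, rfl⟩ := Submodule.Quotient.mk_surjective Q x
        simp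
      map_smul' := by
        intro c a
        refine LinearMap.ext fun x => ?_
        obtain ⟨y, rfl⟩ := Submodule.Quotient.mk_surjective Q x
        simp }
  have hker1 : Q ≤ LinearMap.ker h := by
    intro x hx
    obtain ⟨y, rfl⟩ := hx
    refine LinearMap.ext fun z => ?_
    obtain ⟨w, rfl⟩ := Submodule.Quotient.mk_surjective Q z
    show Q.mkQ (β 0 (D y) w) = 0
    simp [hses1]
  refine ⟨Q.liftQ h hker1, fun a b => rfl, ?_, ?_⟩
  · -- skew symmetry
    intro x y
    obtain ⟨a, rfl⟩ := Submodule.Quotient.mk_surjective Q x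
    obtain ⟨b, rfl⟩ := Submodule.Quotient.mk_surjective Q y
    show Q.mkQ (β 0 a b) = - Q.mkQ (β 0 b a)
    rw [eq_neg_iff_add_eq_zero, ← map_add, Submodule.mkQ_apply,
      Submodule.Quotient.mk_eq_zero]
    obtain ⟨N, hN⟩ := hfin b a
    have hN' : ∀ n : ℕ, N + 1 ≤ n → β n b a = 0 := fun n hn => hN n (by omega)
    have hsk := hskew a b (N + 1) hN'
    rw [Finset.sum_range_succ', pow_zero, one_smul, Function.iterate_zero_apply,
      neg_add] at hsk
    rw [hsk]
    have : -∑ i ∈ Finset.range N,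
        ((-1 : ℂ) ^ (i + 1)) • (⇑D)^[i + 1] (β (i + 1) b a) + - β 0 b a + β 0 b a
        = -∑ i ∈ Finset.range N,
        ((-1 : ℂ) ^ (i + 1)) • (⇑D)^[i + 1] (β (i + 1) b a) := by ring
    rw [this]
    refine neg_mem (Submodule.sum_mem Q fun i _ => Submodule.smul_mem Q _ ?_)
    rw [Function.iterate_succ_apply']
    exact ⟨(⇑D)^[i] (β (i + 1) b a), rfl⟩
  · -- Jacobi
    intro x y z
    obtain ⟨a, rfl⟩ := Submodule.Quotient.mk_surjective Q x
    obtain ⟨b, rfl⟩ := Submodule.Quotient.mk_surjective Q y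
    obtain ⟨c, rfl⟩ := Submodule.Quotient.mk_surjective Q z
    show Q.mkQ (β 0 a (β 0 b c)) = Q.mkQ (β 0 (β 0 a b) c) + Q.mkQ (β 0 b (β 0 a c))
    rw [← map_add, hjac]
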